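/- Let B = k[x_1,...,x_n,T_1,...,T_n] with n ≥ 2, bigraded by deg x_i = (1,0), deg T_i = (0,1). Let f ∈ k[x_1,...,x_n] be a nonzero homogeneous polynomial of degree d ≥ 1, and let f_0 = f, f_1,...,f_d be a downgraded sequence of f: that is, f_i = (T_1 ... T_n)·∂f_{i-1} where ∂f_{i-1} ∈ B^n is any column of bihomogeneous entries of equal bidegree with (x_1 ... x_n)·∂f_{i-1} = f_{i-1}. Then for all 0 ≤ i ≤ d, f_i is nonzero and bihomogeneous of bidegree (d−i, i). -/
import Mathlib


open MvPolynomial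

noncomputable section

variable (k : Type*) [Field k] (n : ℕ)

/-- The polynomial ring `B = k[x₁,…,xₙ,T₁,…,Tₙ]`. -/
abbrev B := MvPolynomial (Fin n ⊕ Fin n) k

/-- The variable `xᵢ`. -/
def xv (i : Fin n) : B k n := X (Sum.inl i)

/-- The variable `Tᵢ`. -/
def Tv (i : Fin n) : B k n := X (Sum.inr i)

/-- The ideal `I₂(ψ)` of 2×2 minors of the matrix `ψ` with rows `(x₁,…,xₙ)`, `(T₁,…,Tₙ)`. -/
def I2 : Ideal (B k n) :=
  Ideal.span {p | ∃ i j : Fin n, p = xv k n i * Tv k n j - xv k n j * Tv k n i}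

/-- The bigrading: `deg xᵢ = (1,0)`, `deg Tᵢ = (0,1)`. -/
def w : (Fin n ⊕ Fin n) → ℕ × ℕ := Sum.elim (fun _ => (1, 0)) (fun _ => (0, 1))

/-- `fs` (with witnessing columns `co`) is a downgraded sequence of `F` (with `deg F = d`):
`fs 0 = F(x)`, and for `i < d`, `co i` is a column of bihomogeneous entries of equal bidegree
with `(x₁ … xₙ)·(co i) = fs i` and `fs (i+1) = (T₁ … Tₙ)·(co i)`. -/
def IsDowngradedSeq (d : ℕ) (F : MvPolynomial (Fin n) k) (fs : ℕ → B k n)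
    (co : ℕ → Fin n → B k n) : Prop :=
  fs 0 = rename Sum.inl F ∧
  ∀ i < d, (∃ m : ℕ × ℕ, ∀ j, IsWeightedHomogeneous (w n) (co i j) m) ∧
    (∑ j, xv k n j * co i j) = fs i ∧ fs (i + 1) = ∑ j, Tv k n j * co i j

/-- Each term of a downgraded sequence of a nonzero degree-`d` homogeneous `F` is nonzero
and bihomogeneous of bidegree `(d−i, i)`. -/
theorem downgraded_seq_nonzero_bihomogeneous (hn : 2 ≤ n) (d : ℕ) (hd : 1 ≤ d)
    (F : MvPolynomial (Fin n) k) (hF : F.IsHomogeneous d) (hF0 : F ≠ 0)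
    (fs : ℕ → B k n) (co : ℕ → Fin n → B k n)
    (h : IsDowngradedSeq k n d F fs co) :
    ∀ i ≤ d, fs i ≠ 0 ∧ IsWeightedHomogeneous (w n) (fs i) (d - i, i) := by
  obtain ⟨h0, hstep⟩ := h
  -- The substitution θ : x_j ↦ X j, T_j ↦ X j
  set θ : B k n →ₐ[k] MvPolynomial (Fin n) k := aeval (Sum.elim X X) with hθ
  have hθx : ∀ j, θ (xv k n j) = X j := fun j => by simp [hθ, xv]
  have hθT : ∀ j, θ (Tv k n j) = X j := fun j => by simp [hθ, Tv]
  -- θ (fs i) = F for all i ≤ d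
  have key : ∀ i ≤ d, θ (fs i) = F := by
    intro i
    induction i with
    | zero =>
      intro _
      rw [h0, hθ, aeval_rename]
      have : (Sum.elim X X ∘ Sum.inl : Fin n → MvPolynomial (Fin n) k) = X := rfl
      rw [this]
      simp
    | succ i ih =>
      intro hi1
      have hi : i < d := hi1
      obtain ⟨_, hsum, hnext⟩ := hstep i hi
      have : θ (fs (i + 1)) = θ (fs i) := by
        rw [hnext, ← hsum, map_sum, map_sum]
        refine Finset.sum_congr rfl fun j _ => ?_
        rw [map_mul, map_mul, hθx, hθT]
      rw [this, ih (le_of_lt hi)]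
  -- nonvanishing
  have hne : ∀ i ≤ d, fs i ≠ 0 := by
    intro i hi hzero
    apply hF0
    have := key i hi
    rw [hzero, map_zero] at this
    exact this.symm
  -- homogeneity
  have hhom : ∀ i ≤ d, IsWeightedHomogeneous (w n) (fs i) (d - i, i) := by
    intro i
    induction i with
    | zero =>
      intro _
      rw [h0]
      intro e he
      obtain ⟨u, hu, hcoeff⟩ := coeff_rename_ne_zero _ _ _ he
      have hdeg := hF hcoeff
      subst hu
      rw [Finsupp.weight_apply] at hdeg ⊢
      rw [Finsupp.sum_mapDomain_index (by simp) (fun b m₁ m₂ => add_smul m₁ m₂ _)]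
      have h1 : (u.sum fun i c => c • w n (Sum.inl i))
          = (u.sum fun _ c => c) • ((1, 0) : ℕ × ℕ) := by
        rw [Finsupp.sum, Finsupp.sum, Finset.sum_smul]
        rfl
      rw [h1]
      have hd2 : (u.sum fun _ c => c) = d := by
        simpa using hdeg
      rw [hd2]
      simp [Prod.ext_iff]
    | succ i ih =>
      intro hi1
      have hi : i < d := hi1
      have hfsi := ih (le_of_lt hi)
      obtain ⟨⟨m, hm⟩, hsum, hnext⟩ := hstep i hi
      -- ∑ x_j c_j is homogeneous of degree (1,0) + m
      have hx : IsWeightedHomogeneous (w n) (fs i) ((1, 0) + m) := by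
        rw [← hsum]
        refine IsWeightedHomogeneous.sum _ _ _ fun j _ => ?_
        have := (isWeightedHomogeneous_X k (w n) (Sum.inl j)).mul (hm j)
        have hw : w n (Sum.inl j) = (1, 0) := rfl
        rwa [hw] at this
      have hmval : (1, 0) + m = (d - i, i) :=
        IsWeightedHomogeneous.inj_right (hne i (le_of_lt hi)) hx hfsi
      have hm1 : m.1 = d - (i + 1) := by
        have := congrArg Prod.fst hmval
        simp at this
        omega
      have hm2 : m.2 = i := by
        have := congrArg Prod.snd hmval
        simpa using this
      rw [hnext]
      refine IsWeightedHomogeneous.sum _ _ _ fun j _ => ?_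
      have := (isWeightedHomogeneous_X k (w n) (Sum.inr j)).mul (hm j)
      have hw : w n (Sum.inr j) = (0, 1) := rfl
      rw [hw] at this
      have : ((0, 1) : ℕ × ℕ) + m = (d - (i + 1), i + 1) := by
        rw [Prod.ext_iff]
        constructor
        · simp [hm1]
        · simp [hm2]; omega
      rw [← this]
      have := (isWeightedHomogeneous_X k (w n) (Sum.inr j)).mul (hm j)
      rwa [hw] at this
  exact fun i hi => ⟨hne i hi, hhom i hi⟩

end
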